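/- Let X be a compact metric space, m: X → ℝ^{d×d}_{psd} continuous, M(ξ) := ∫_X m dξ, and Ψ: ℝ^{d×d}_{psd} → ℝ ∪ {∞} convex with a continuous sensitivity function ψ w.r.t. M(Ξ(X)). Then the map ξ ↦ Ψ(M(ξ)) is continuous on Ξ_fin(X) := {ξ ∈ Ξ(X) : Ψ(M(ξ)) < ∞} with respect to weak convergence of measures. In particular, |Ψ(M(η)) − Ψ(M(ξ))| ≤ max{ −∫_X ψ(M(η),x) dξ(x), −∫_X ψ(M(ξ),x) dη(x) } for all ξ, η ∈ Ξ_fin(X). -/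

import Mathlib

open Matrix MeasureTheory Filter

/-- The information matrix `M(ξ) = ∫_X m(x) dξ(x)` of a design `ξ`, computed entrywise. -/
noncomputable def infoMatrix {X : Type*} [MeasurableSpace X] {d : ℕ}
    (m : X → Matrix (Fin d) (Fin d) ℝ) (ξ : Measure X) : Matrix (Fin d) (Fin d) ℝ :=
  Matrix.of fun i j => ∫ x, m x i j ∂ξ

/-- `ψ` is a sensitivity function of `Ψ` w.r.t. the set of information matrices. -/
def IsSensitivity {X : Type*} [MeasurableSpace X] {d : ℕ}
    (m : X → Matrix (Fin d) (Fin d) ℝ)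
    (Ψ : Matrix (Fin d) (Fin d) ℝ → WithTop ℝ)
    (ψ : Matrix (Fin d) (Fin d) ℝ → X → ℝ) : Prop :=
  ∀ A : Matrix (Fin d) (Fin d) ℝ, A.PosSemidef → Ψ A ≠ ⊤ →
    ∀ η : Measure X, IsProbabilityMeasure η →
      Integrable (fun x => ψ A x) η ∧
      (∃ ts > (0 : ℝ), ∀ t ∈ Set.Icc (0 : ℝ) ts, Ψ (A + t • (infoMatrix m η - A)) ≠ ⊤) ∧
      Tendsto
        (fun t : ℝ =>
          ((Ψ (A + t • (infoMatrix m η - A))).untopD 0 - (Ψ A).untopD 0) / t)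
        (nhdsWithin 0 (Set.Ioi 0)) (nhds (∫ x, ψ A x ∂η))

section Aux

variable {X : Type*} [MetricSpace X] [CompactSpace X] [MeasurableSpace X] [BorelSpace X] {d : ℕ}

/-- Entries of a continuous matrix map, as bounded continuous functions. -/
noncomputable def mEntryBCF (m : X → Matrix (Fin d) (Fin d) ℝ) (hm : Continuous m)
    (i j : Fin d) : BoundedContinuousFunction X ℝ :=
  BoundedContinuousFunction.mkOfCompact ⟨fun x => m x i j, hm.matrix_elem i j⟩

lemma infoMatrix_entry (m : X → Matrix (Fin d) (Fin d) ℝ) (ξ : Measure X) (i j : Fin d) :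
    infoMatrix m ξ i j = ∫ x, m x i j ∂ξ := rfl

lemma entry_integrable (m : X → Matrix (Fin d) (Fin d) ℝ) (hm : Continuous m)
    (ξ : Measure X) [IsFiniteMeasure ξ] (i j : Fin d) :
    Integrable (fun x => m x i j) ξ :=
  (mEntryBCF m hm i j).integrable ξ

lemma infoMatrix_posSemidef (m : X → Matrix (Fin d) (Fin d) ℝ) (hm : Continuous m)
    (hpsd : ∀ x, (m x).PosSemidef) (ξ : Measure X) [IsFiniteMeasure ξ] :
    (infoMatrix m ξ).PosSemidef := by
  refine PosSemidef.of_dotProduct_mulVec_nonneg ?_ ?_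
  · ext i j
    simp only [conjTranspose_apply, infoMatrix_entry, star_trivial]
    have : ∀ x, m x j i = m x i j := by
      intro x
      have := (hpsd x).1
      have h := congrFun (congrFun this i) j
      simpa [conjTranspose_apply] using h
    simp [this]
  · intro v
    have Hint : ∀ i : Fin d, Integrable (fun x => v i * ∑ j, m x i j * v j) ξ := fun i =>
      (integrable_finset_sum _ fun j _ =>
        (entry_integrable m hm ξ i j).mul_const (v j)).const_mul (v i)
    have inner : ∀ i : Fin d, ∫ x, v i * ∑ j, m x i j * v j ∂ξ
        = v i * ∑ j, (∫ x, m x i j ∂ξ) * v j := by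
      intro i
      rw [integral_const_mul]
      congr 1
      rw [integral_finset_sum _ (fun j _ => (entry_integrable m hm ξ i j).mul_const (v j))]
      exact Finset.sum_congr rfl fun j _ => integral_mul_const _ _
    have key : dotProduct (star v) ((infoMatrix m ξ) *ᵥ v)
        = ∫ x, dotProduct (star v) ((m x) *ᵥ v) ∂ξ := by
      simp only [dotProduct, mulVec, star_trivial, infoMatrix_entry]
      rw [integral_finset_sum _ (fun i _ => Hint i)]
      exact Finset.sum_congr rfl fun i _ => (inner i).symm
    rw [key]
    exact integral_nonneg fun x => (hpsd x).dotProduct_mulVec_nonneg v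

/-- affine combination rewriting -/
lemma combo_eq (A B : Matrix (Fin d) (Fin d) ℝ) (t : ℝ) :
    B + t • (A - B) = t • A + (1 - t) • B := by
  ext i j
  simp [Matrix.add_apply, Matrix.smul_apply, Matrix.sub_apply, smul_eq_mul]
  ring

/-- The subgradient inequality from the sensitivity function. -/
lemma grad_ineq {m : X → Matrix (Fin d) (Fin d) ℝ}
    {Ψ : Matrix (Fin d) (Fin d) ℝ → WithTop ℝ}
    (hconv : ∀ A B : Matrix (Fin d) (Fin d) ℝ, A.PosSemidef → B.PosSemidef →
      ∀ α : ℝ, 0 ≤ α → α ≤ 1 →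
        Ψ (α • A + (1 - α) • B) ≤ (α : WithTop ℝ) * Ψ A + ((1 - α : ℝ) : WithTop ℝ) * Ψ B)
    {ψ : Matrix (Fin d) (Fin d) ℝ → X → ℝ} (hψ : IsSensitivity m Ψ ψ)
    (ξ η : Measure X) (hξP : IsProbabilityMeasure ξ) (hηP : IsProbabilityMeasure η)
    (hξpsd : (infoMatrix m ξ).PosSemidef) (hηpsd : (infoMatrix m η).PosSemidef)
    (hξ : Ψ (infoMatrix m ξ) ≠ ⊤) (hη : Ψ (infoMatrix m η) ≠ ⊤) :
    ∫ x, ψ (infoMatrix m ξ) x ∂η ≤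
      (Ψ (infoMatrix m η)).untopD 0 - (Ψ (infoMatrix m ξ)).untopD 0 := by
  obtain ⟨-, ⟨ts, hts, hfin⟩, hTend⟩ := hψ (infoMatrix m ξ) hξpsd hξ η hηP
  obtain ⟨a, ha⟩ := WithTop.ne_top_iff_exists.mp hη
  obtain ⟨b, hb⟩ := WithTop.ne_top_iff_exists.mp hξ
  have ha' : (Ψ (infoMatrix m η)).untopD 0 = a := by rw [← ha]; rfl
  have hb' : (Ψ (infoMatrix m ξ)).untopD 0 = b := by rw [← hb]; rfl
  rw [ha', hb']
  refine le_of_tendsto hTend ?_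
  have hmem : Set.Ioc (0:ℝ) (min ts 1) ∈ nhdsWithin 0 (Set.Ioi 0) :=
    Ioc_mem_nhdsGT_of_mem ⟨le_refl 0, lt_min hts one_pos⟩
  filter_upwards [hmem] with t ht
  have ht0 : 0 < t := ht.1
  have hts' : t ≤ ts := ht.2.trans (min_le_left _ _)
  have ht1 : t ≤ 1 := ht.2.trans (min_le_right _ _)
  have hne : Ψ (infoMatrix m ξ + t • (infoMatrix m η - infoMatrix m ξ)) ≠ ⊤ :=
    hfin t ⟨ht0.le, hts'⟩
  obtain ⟨c, hc⟩ := WithTop.ne_top_iff_exists.mp hne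
  have hc' : (Ψ (infoMatrix m ξ + t • (infoMatrix m η - infoMatrix m ξ))).untopD 0 = c := by
    rw [← hc]; rfl
  have hineq := hconv (infoMatrix m η) (infoMatrix m ξ) hηpsd hξpsd t ht0.le ht1
  rw [← combo_eq, ← ha, ← hb, ← hc] at hineq
  have hcoe : ((c : WithTop ℝ)) ≤ ((t * a + (1 - t) * b : ℝ) : WithTop ℝ) := by
    rw [WithTop.coe_add, WithTop.coe_mul, WithTop.coe_mul]
    exact_mod_cast hineq
  have hcr : c ≤ t * a + (1 - t) * b := WithTop.coe_le_coe.mp hcoe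
  rw [hc', hb']
  rw [div_le_iff₀ ht0]
  nlinarith

/-- `∫ ψ(M(ξ), x) dξ(x) = 0`. -/
lemma integral_sens_self_eq_zero {m : X → Matrix (Fin d) (Fin d) ℝ}
    {Ψ : Matrix (Fin d) (Fin d) ℝ → WithTop ℝ}
    {ψ : Matrix (Fin d) (Fin d) ℝ → X → ℝ} (hψ : IsSensitivity m Ψ ψ)
    (ξ : Measure X) (hξP : IsProbabilityMeasure ξ)
    (hξpsd : (infoMatrix m ξ).PosSemidef) (hξ : Ψ (infoMatrix m ξ) ≠ ⊤) :
    ∫ x, ψ (infoMatrix m ξ) x ∂ξ = 0 := by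
  obtain ⟨-, -, hTend⟩ := hψ (infoMatrix m ξ) hξpsd hξ ξ hξP
  have h0 : Tendsto (fun t : ℝ =>
      ((Ψ (infoMatrix m ξ + t • (infoMatrix m ξ - infoMatrix m ξ))).untopD 0 -
        (Ψ (infoMatrix m ξ)).untopD 0) / t)
      (nhdsWithin 0 (Set.Ioi 0)) (nhds 0) := by
    have : (fun t : ℝ =>
        ((Ψ (infoMatrix m ξ + t • (infoMatrix m ξ - infoMatrix m ξ))).untopD 0 -
          (Ψ (infoMatrix m ξ)).untopD 0) / t) = fun _ : ℝ => (0 : ℝ) := by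
      funext t
      simp [sub_self, smul_zero, add_zero]
    rw [this]
    exact tendsto_const_nhds
  exact tendsto_nhds_unique hTend h0

/-- Local uniform closeness of a jointly continuous sensitivity function. -/
lemma unif_close {S : Set (Matrix (Fin d) (Fin d) ℝ)}
    {ψ : Matrix (Fin d) (Fin d) ℝ → X → ℝ}
    (hψcont : ContinuousOn (fun q : Matrix (Fin d) (Fin d) ℝ × X => ψ q.1 q.2)
      (S ×ˢ Set.univ))
    {A₀ : Matrix (Fin d) (Fin d) ℝ} (hA₀ : A₀ ∈ S) {ε : ℝ} (hε : 0 < ε) :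
    ∃ U ∈ nhds A₀, ∀ A ∈ U, A ∈ S → ∀ x : X, |ψ A x - ψ A₀ x| < ε := by
  have hx : ∀ x : X, ∃ (U : Set (Matrix (Fin d) (Fin d) ℝ)) (V : Set X),
      IsOpen U ∧ IsOpen V ∧ A₀ ∈ U ∧ x ∈ V ∧
      ∀ A ∈ U, A ∈ S → ∀ y ∈ V, |ψ A y - ψ A₀ x| < ε / 2 := by
    intro x
    have hcx := hψcont (A₀, x) ⟨hA₀, Set.mem_univ x⟩
    have hb : (fun q : Matrix (Fin d) (Fin d) ℝ × X => ψ q.1 q.2) ⁻¹'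
        Metric.ball (ψ A₀ x) (ε / 2) ∈ nhdsWithin (A₀, x) (S ×ˢ Set.univ) :=
      hcx (Metric.ball_mem_nhds _ (half_pos hε))
    rw [mem_nhdsWithin] at hb
    obtain ⟨u, hu_open, hu_mem, hu_sub⟩ := hb
    obtain ⟨U, V, hU, hV, hAU, hxV, hUV⟩ := isOpen_prod_iff.mp hu_open A₀ x hu_mem
    refine ⟨U, V, hU, hV, hAU, hxV, ?_⟩
    intro A hAU' hAS y hyV
    have : (A, y) ∈ u ∩ S ×ˢ Set.univ := ⟨hUV ⟨hAU', hyV⟩, hAS, Set.mem_univ y⟩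
    have := hu_sub this
    simpa [Real.dist_eq] using this
  choose U V hUo hVo hAU hxV hball using hx
  have hcover : Set.univ ⊆ ⋃ x : X, V x := fun y _ => Set.mem_iUnion.mpr ⟨y, hxV y⟩
  obtain ⟨T, hT⟩ := isCompact_univ.elim_finite_subcover V hVo hcover
  refine ⟨⋂ x ∈ T, U x, ?_, ?_⟩
  · exact (isOpen_biInter_finset fun x _ => hUo x).mem_nhds
      (Set.mem_iInter₂.mpr fun x _ => hAU x)
  · intro A hAUall hAS y
    obtain ⟨i, hiT, hyVi⟩ := Set.mem_iUnion₂.mp (hT (Set.mem_univ y))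
    have hAUi : A ∈ U i := Set.mem_iInter₂.mp hAUall i hiT
    have h1 := hball i A hAUi hAS y hyVi
    have h2 := hball i A₀ (hAU i) hA₀ y hyVi
    have htri := abs_sub_le (ψ A y) (ψ A₀ i) (ψ A₀ y)
    rw [abs_sub_comm (ψ A₀ i) (ψ A₀ y)] at htri
    linarith

end Aux

/-- If the convex criterion `Ψ` admits a (jointly) continuous sensitivity function `ψ`, then
`ξ ↦ Ψ(M(ξ))` is continuous on `Ξ_fin(X)` w.r.t. the topology of weak convergence; in
particular one has the bound
`|Ψ(M(η)) − Ψ(M(ξ))| ≤ max{−∫ ψ(M(η),x) dξ(x), −∫ ψ(M(ξ),x) dη(x)}`. -/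
theorem criterion_continuous_on_finite_designs {X : Type*} [MetricSpace X] [CompactSpace X]
    [MeasurableSpace X] [BorelSpace X] {d : ℕ}
    (m : X → Matrix (Fin d) (Fin d) ℝ) (hm : Continuous m)
    (hpsd : ∀ x, (m x).PosSemidef)
    (Ψ : Matrix (Fin d) (Fin d) ℝ → WithTop ℝ)
    (hconv : ∀ A B : Matrix (Fin d) (Fin d) ℝ, A.PosSemidef → B.PosSemidef →
      ∀ α : ℝ, 0 ≤ α → α ≤ 1 →
        Ψ (α • A + (1 - α) • B) ≤ (α : WithTop ℝ) * Ψ A + ((1 - α : ℝ) : WithTop ℝ) * Ψ B)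
    (ψ : Matrix (Fin d) (Fin d) ℝ → X → ℝ) (hψ : IsSensitivity m Ψ ψ)
    (hψcont : ContinuousOn (fun q : Matrix (Fin d) (Fin d) ℝ × X => ψ q.1 q.2)
      ({A : Matrix (Fin d) (Fin d) ℝ | A.PosSemidef ∧ Ψ A ≠ ⊤} ×ˢ Set.univ)) :
    (∀ ξ η : Measure X, IsProbabilityMeasure ξ → IsProbabilityMeasure η →
      Ψ (infoMatrix m ξ) ≠ ⊤ → Ψ (infoMatrix m η) ≠ ⊤ →
      |(Ψ (infoMatrix m η)).untopD 0 - (Ψ (infoMatrix m ξ)).untopD 0| ≤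
        max (-(∫ x, ψ (infoMatrix m η) x ∂ξ)) (-(∫ x, ψ (infoMatrix m ξ) x ∂η))) ∧
    ContinuousOn (fun μ : ProbabilityMeasure X => (Ψ (infoMatrix m (μ : Measure X))).untopD 0)
      {μ : ProbabilityMeasure X | Ψ (infoMatrix m (μ : Measure X)) ≠ ⊤} := by
  have hMpsd : ∀ (ξ : Measure X) [IsFiniteMeasure ξ], (infoMatrix m ξ).PosSemidef :=
    fun ξ _ => infoMatrix_posSemidef m hm hpsd ξ
  -- Part 1
  have part1 : ∀ ξ η : Measure X, IsProbabilityMeasure ξ → IsProbabilityMeasure η →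
      Ψ (infoMatrix m ξ) ≠ ⊤ → Ψ (infoMatrix m η) ≠ ⊤ →
      |(Ψ (infoMatrix m η)).untopD 0 - (Ψ (infoMatrix m ξ)).untopD 0| ≤
        max (-(∫ x, ψ (infoMatrix m η) x ∂ξ)) (-(∫ x, ψ (infoMatrix m ξ) x ∂η)) := by
    intro ξ η hξP hηP hξ hη
    have hξpsd : (infoMatrix m ξ).PosSemidef := by haveI := hξP; exact hMpsd ξ
    have hηpsd : (infoMatrix m η).PosSemidef := by haveI := hηP; exact hMpsd η
    have h1 := grad_ineq hconv hψ ξ η hξP hηP hξpsd hηpsd hξ hη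
    have h2 := grad_ineq hconv hψ η ξ hηP hξP hηpsd hξpsd hη hξ
    rw [abs_sub_le_iff]
    constructor
    · refine le_trans ?_ (le_max_left _ _)
      linarith
    · refine le_trans ?_ (le_max_right _ _)
      linarith
  refine ⟨part1, ?_⟩
  -- Part 2: continuity
  set S : Set (Matrix (Fin d) (Fin d) ℝ) := {A | A.PosSemidef ∧ Ψ A ≠ ⊤} with hS
  set s : Set (ProbabilityMeasure X) :=
    {μ : ProbabilityMeasure X | Ψ (infoMatrix m (μ : Measure X)) ≠ ⊤} with hs
  have hMcont : Continuous (fun μ : ProbabilityMeasure X => infoMatrix m (μ : Measure X)) := by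
    apply continuous_matrix
    intro i j
    have := ProbabilityMeasure.continuous_integral_boundedContinuousFunction
      (X := X) (mEntryBCF m hm i j)
    convert this using 2
    rfl
  intro μ₀ hμ₀
  have hμ₀' : Ψ (infoMatrix m (μ₀ : Measure X)) ≠ ⊤ := hμ₀
  have hM₀psd : (infoMatrix m (μ₀ : Measure X)).PosSemidef := hMpsd _
  have hM₀S : infoMatrix m (μ₀ : Measure X) ∈ S := ⟨hM₀psd, hμ₀'⟩
  -- the slice x ↦ ψ (M μ₀) x is continuous
  have hslice : Continuous fun x : X => ψ (infoMatrix m (μ₀ : Measure X)) x := by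
    rw [← continuousOn_univ]
    have hmap : ContinuousOn
        (fun x : X => ((infoMatrix m (μ₀ : Measure X), x) :
          Matrix (Fin d) (Fin d) ℝ × X)) Set.univ :=
      (continuous_const.prodMk continuous_id).continuousOn
    exact hψcont.comp hmap fun x _ => ⟨hM₀S, Set.mem_univ x⟩
  have hzero : ∫ x, ψ (infoMatrix m (μ₀ : Measure X)) x ∂(μ₀ : Measure X) = 0 :=
    integral_sens_self_eq_zero hψ (μ₀ : Measure X) (by infer_instance) hM₀psd hμ₀'
  -- limit of the second term
  have h2 : Tendsto (fun μ : ProbabilityMeasure X =>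
      ∫ x, ψ (infoMatrix m (μ₀ : Measure X)) x ∂(μ : Measure X))
      (nhdsWithin μ₀ s) (nhds 0) := by
    have hc := ProbabilityMeasure.continuous_integral_boundedContinuousFunction
      (X := X) (BoundedContinuousFunction.mkOfCompact
        ⟨fun x => ψ (infoMatrix m (μ₀ : Measure X)) x, hslice⟩)
    have := hc.tendsto μ₀
    simp only [BoundedContinuousFunction.mkOfCompact_apply, ContinuousMap.coe_mk] at this
    rw [hzero] at this
    exact this.mono_left nhdsWithin_le_nhds
  -- limit of the first term
  have h1 : Tendsto (fun μ : ProbabilityMeasure X =>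
      ∫ x, ψ (infoMatrix m (μ : Measure X)) x ∂(μ₀ : Measure X))
      (nhdsWithin μ₀ s) (nhds 0) := by
    rw [NormedAddCommGroup.tendsto_nhds_zero]
    intro ε hε
    obtain ⟨U, hU, hUclose⟩ := unif_close hψcont hM₀S (half_pos hε)
    have hMtend : Tendsto (fun μ : ProbabilityMeasure X => infoMatrix m (μ : Measure X))
        (nhdsWithin μ₀ s) (nhds (infoMatrix m (μ₀ : Measure X))) :=
      (hMcont.tendsto μ₀).mono_left nhdsWithin_le_nhds
    filter_upwards [hMtend hU, self_mem_nhdsWithin] with μ hμU hμs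
    have hμpsd : (infoMatrix m (μ : Measure X)).PosSemidef := hMpsd _
    have hμne : Ψ (infoMatrix m (μ : Measure X)) ≠ ⊤ := hμs
    have hμS : infoMatrix m (μ : Measure X) ∈ S := ⟨hμpsd, hμne⟩
    have hIntμ : Integrable (fun x => ψ (infoMatrix m (μ : Measure X)) x) (μ₀ : Measure X) :=
      (hψ _ hμpsd hμne (μ₀ : Measure X) (by infer_instance)).1
    have hIntμ₀ : Integrable (fun x => ψ (infoMatrix m (μ₀ : Measure X)) x) (μ₀ : Measure X) :=
      (hψ _ hM₀psd hμ₀' (μ₀ : Measure X) (by infer_instance)).1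
    have hbd : ‖∫ x, (ψ (infoMatrix m (μ : Measure X)) x -
        ψ (infoMatrix m (μ₀ : Measure X)) x) ∂(μ₀ : Measure X)‖ ≤
        (ε / 2) * ((μ₀ : Measure X) Set.univ).toReal := by
      apply norm_integral_le_of_norm_le_const
      filter_upwards with x
      exact le_of_lt (by simpa [Real.norm_eq_abs] using hUclose _ hμU hμS x)
    rw [integral_sub hIntμ hIntμ₀, hzero, sub_zero] at hbd
    have : ((μ₀ : Measure X) Set.univ).toReal = 1 := by simp
    rw [this, mul_one] at hbd
    exact lt_of_le_of_lt hbd (half_lt_self hε)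
  -- assemble
  have key : Tendsto (fun μ : ProbabilityMeasure X =>
      |(Ψ (infoMatrix m (μ : Measure X))).untopD 0 -
        (Ψ (infoMatrix m (μ₀ : Measure X))).untopD 0|)
      (nhdsWithin μ₀ s) (nhds 0) := by
    have hbound : ∀ᶠ μ : ProbabilityMeasure X in nhdsWithin μ₀ s,
        |(Ψ (infoMatrix m (μ : Measure X))).untopD 0 -
          (Ψ (infoMatrix m (μ₀ : Measure X))).untopD 0| ≤
        max (-(∫ x, ψ (infoMatrix m (μ : Measure X)) x ∂(μ₀ : Measure X)))
          (-(∫ x, ψ (infoMatrix m (μ₀ : Measure X)) x ∂(μ : Measure X))) := by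
      filter_upwards [self_mem_nhdsWithin] with μ hμs
      exact part1 (μ₀ : Measure X) (μ : Measure X) (by infer_instance) (by infer_instance)
        hμ₀' hμs
    have hg : Tendsto (fun μ : ProbabilityMeasure X =>
        max (-(∫ x, ψ (infoMatrix m (μ : Measure X)) x ∂(μ₀ : Measure X)))
          (-(∫ x, ψ (infoMatrix m (μ₀ : Measure X)) x ∂(μ : Measure X))))
        (nhdsWithin μ₀ s) (nhds 0) := by
      have := (h1.neg).max (h2.neg)
      simpa using this
    exact squeeze_zero' (by filter_upwards with μ; exact abs_nonneg _) hbound hg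
  rw [ContinuousWithinAt, tendsto_iff_dist_tendsto_zero]
  simpa [Real.dist_eq] using key
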